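/- Let β > 0, a ∈ ℝⁿ with all entries strictly positive, and define f : ℝⁿ → ℝ by f(x) := ⟨a, x⟩ + √(1 + β⟨x, x⟩). Then (i) f is convex on ℝⁿ, (ii) ∇f is Lipschitz continuous on ℝⁿ with constant β, and (iii) for every closed convex set C ⊆ ℝⁿ₊, f satisfies condition (B) on C: for every x ∈ C and every nonzero d in the asymptotic cone C_∞, ⟨∇f(x), d⟩ > 0. -/

import Mathlib

open scoped RealInnerProductSpace

lemma sqrt_prod_ge (β A B : ℝ) (hβ : 0 < β) (hA : 0 ≤ A) (hB : 0 ≤ B) :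
    1 + β*A*B ≤ Real.sqrt (1+β*A^2) * Real.sqrt (1+β*B^2) := by
  rw [← Real.sqrt_mul (by positivity)]
  have h1 : (1 + β*A*B)^2 ≤ (1+β*A^2)*(1+β*B^2) := by nlinarith [sq_nonneg (A-B)]
  calc 1 + β*A*B = Real.sqrt ((1+β*A*B)^2) := (Real.sqrt_sq (by positivity)).symm
    _ ≤ _ := Real.sqrt_le_sqrt h1

lemma hasGrad_aux {n : ℕ} (β : ℝ) (hβ : 0 < β) (a x : EuclideanSpace ℝ (Fin n)) :
    HasGradientAt (fun z : EuclideanSpace ℝ (Fin n) => ⟪a, z⟫ + Real.sqrt (1 + β * ⟪z, z⟫))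
      (a + (β / Real.sqrt (1 + β * ⟪x, x⟫)) • x) x := by
  have hpos : (0:ℝ) < 1 + β * ⟪x, x⟫ := by
    nlinarith [real_inner_self_nonneg (x := x)]
  have hs : 0 < Real.sqrt (1 + β * ⟪x, x⟫) := Real.sqrt_pos.2 hpos
  have h1 : HasFDerivAt (fun z : EuclideanSpace ℝ (Fin n) => ⟪a, z⟫) (innerSL ℝ a) x :=
    (innerSL ℝ a).hasFDerivAt
  have h2 : HasFDerivAt (fun z : EuclideanSpace ℝ (Fin n) => 1 + β * ⟪z, z⟫)
      ((2 * β) • (innerSL ℝ x)) x := by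
    have := ((hasFDerivAt_id x).inner ℝ (hasFDerivAt_id x)).const_mul β
    have h0 := this.const_add 1
    refine h0.congr_fderiv ?_
    ext w
    simp [real_inner_comm]
    ring
  have h3 : HasDerivAt Real.sqrt (1 / (2 * Real.sqrt (1 + β * ⟪x, x⟫))) (1 + β * ⟪x, x⟫) :=
    Real.hasDerivAt_sqrt (ne_of_gt hpos)
  have h4 := h3.comp_hasFDerivAt x h2
  have h5 := h1.add h4
  rw [hasGradientAt_iff_hasFDerivAt]
  refine h5.congr_fderiv ?_
  ext w
  simp [inner_add_left, inner_smul_left, real_inner_comm]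
  field_simp

lemma sqrt_convex_scalar (β s t X Y : ℝ) (hβ : 0 < β) (hX : 0 ≤ X) (hY : 0 ≤ Y)
    (hs : 0 ≤ s) (ht : 0 ≤ t) (hst : s + t = 1) :
    Real.sqrt (1+β*(s*X+t*Y)^2) ≤ s*Real.sqrt (1+β*X^2) + t*Real.sqrt (1+β*Y^2) := by
  have ht' : t = 1 - s := by linarith
  subst ht'
  set P := Real.sqrt (1+β*X^2) with hP
  set Q := Real.sqrt (1+β*Y^2) with hQ
  have hP0 : 0 ≤ P := Real.sqrt_nonneg _
  have hQ0 : 0 ≤ Q := Real.sqrt_nonneg _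
  have hP2 : P^2 = 1+β*X^2 := Real.sq_sqrt (by positivity)
  have hQ2 : Q^2 = 1+β*Y^2 := Real.sq_sqrt (by positivity)
  have hPQ : 1 + β*X*Y ≤ P*Q := sqrt_prod_ge β X Y hβ hX hY
  have e1 : (s*P)^2 = s^2*(1+β*X^2) := by rw [mul_pow, hP2]
  have e2 : ((1-s)*Q)^2 = (1-s)^2*(1+β*Y^2) := by rw [mul_pow, hQ2]
  have key : 1+β*(s*X+(1-s)*Y)^2 ≤ (s*P+(1-s)*Q)^2 := by
    nlinarith [e1, e2, mul_nonneg (mul_nonneg hs ht) (sub_nonneg.2 hPQ)]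
  calc Real.sqrt (1+β*(s*X+(1-s)*Y)^2) ≤ Real.sqrt ((s*P+(1-s)*Q)^2) := Real.sqrt_le_sqrt key
    _ = s*P+(1-s)*Q := Real.sqrt_sq (by nlinarith [hP0, hQ0, mul_nonneg hs hP0, mul_nonneg ht hQ0])

lemma lip_scalar (β A B c p q : ℝ) (hβ : 0 < β) (hA : 0 ≤ A) (hB : 0 ≤ B)
    (hc : c ≤ A*B) (hp2 : p^2 = 1+β*A^2) (hq2 : q^2 = 1+β*B^2)
    (hp1 : 1 ≤ p) (hq1 : 1 ≤ q) (hpq : 1 + β*A*B ≤ p*q) :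
    A^2/p^2 + B^2/q^2 - 2*c/(p*q) ≤ A^2 + B^2 - 2*c := by
  have hp0 : 0 < p := lt_of_lt_of_le one_pos hp1
  have hq0 : 0 < q := lt_of_lt_of_le one_pos hq1
  have hpq1 : 1 ≤ p*q := le_trans (by nlinarith [mul_nonneg hA hB]) hpq
  have key : A^2*q^2 + B^2*p^2 - 2*c*(p*q) ≤ (A^2+B^2-2*c)*(p^2*q^2) := by
    have hM : 0 ≤ p*q*(p*q-1) := mul_nonneg (by positivity) (by linarith)
    have e1 : A^2*(p^2*q^2) - A^2*q^2 = β*A^4*q^2 := by rw [hp2]; ring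
    have e2 : B^2*(p^2*q^2) - B^2*p^2 = β*B^4*p^2 := by rw [hq2]; ring
    rcases le_or_gt c 0 with hcn | hcp
    · nlinarith [e1, e2, mul_nonneg (neg_nonneg.2 hcn) hM, mul_nonneg (mul_nonneg hβ.le (pow_nonneg hA 4)) (sq_nonneg q), mul_nonneg (mul_nonneg hβ.le (pow_nonneg hB 4)) (sq_nonneg p)]
    · have h1 : p*q*(p*q-1) ≤ p^2*q^2 - (1+β*A*B) := by nlinarith
      have h2 : c*(p*q*(p*q-1)) ≤ (A*B)*(p^2*q^2 - (1+β*A*B)) := by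
        calc c*(p*q*(p*q-1)) ≤ (A*B)*(p*q*(p*q-1)) := mul_le_mul_of_nonneg_right hc hM
          _ ≤ (A*B)*(p^2*q^2 - (1+β*A*B)) := mul_le_mul_of_nonneg_left h1 (mul_nonneg hA hB)
      have h3 : 2*(A*B)*(p^2*q^2 - (1+β*A*B)) ≤ β*A^4*q^2 + β*B^4*p^2 := by
        rw [hp2, hq2]
        nlinarith [mul_nonneg (mul_nonneg hβ.le (sq_nonneg (A-B))) (add_nonneg (sq_nonneg A) (sq_nonneg B)),
          mul_nonneg (mul_nonneg (mul_nonneg hβ.le hβ.le) (sq_nonneg (A*B))) (sq_nonneg (A-B))]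
      nlinarith [h2, h3, e1, e2]
  have heq : A^2/p^2 + B^2/q^2 - 2*c/(p*q) = (A^2*q^2 + B^2*p^2 - 2*c*(p*q))/(p^2*q^2) := by
    field_simp
  rw [heq, div_le_iff₀ (by positivity)]
  linarith [key]

theorem sqrt_example_convex_A_and_B (n : ℕ) (β : ℝ) (hβ : 0 < β)
    (a : EuclideanSpace ℝ (Fin n)) (ha : ∀ i, 0 < a i)
    (f : EuclideanSpace ℝ (Fin n) → ℝ)
    (hf : ∀ z : EuclideanSpace ℝ (Fin n),
      f z = ⟪a, z⟫ + Real.sqrt (1 + β * ⟪z, z⟫)) :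
    ConvexOn ℝ Set.univ f ∧
    (∀ x y : EuclideanSpace ℝ (Fin n),
      ‖gradient f x - gradient f y‖ ≤ β * ‖x - y‖) ∧
    (∀ C : Set (EuclideanSpace ℝ (Fin n)), IsClosed C → Convex ℝ C →
      C ⊆ {z : EuclideanSpace ℝ (Fin n) | ∀ i, 0 ≤ z i} →
      ∀ x ∈ C, ∀ d : EuclideanSpace ℝ (Fin n),
        (∀ y ∈ C, ∀ t : ℝ, 0 ≤ t → y + t • d ∈ C) → d ≠ 0 → 0 < ⟪gradient f x, d⟫) := by
  have hfe : f = fun z => ⟪a, z⟫ + Real.sqrt (1 + β * ⟪z, z⟫) := funext hf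
  subst hfe
  have hinn : ∀ z : EuclideanSpace ℝ (Fin n), ⟪z, z⟫ = ‖z‖^2 :=
    fun z => real_inner_self_eq_norm_sq z
  have hgrad : ∀ x : EuclideanSpace ℝ (Fin n),
      gradient (fun z => ⟪a, z⟫ + Real.sqrt (1 + β * ⟪z, z⟫)) x
        = a + (β / Real.sqrt (1 + β * ⟪x, x⟫)) • x :=
    fun x => (hasGrad_aux β hβ a x).gradient
  refine ⟨⟨convex_univ, ?_⟩, ?_, ?_⟩
  · -- convexity
    intro x _ y _ s t hs ht hst
    simp only [smul_eq_mul]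
    rw [inner_add_right, real_inner_smul_right, real_inner_smul_right, hinn, hinn, hinn]
    have hz : ‖s • x + t • y‖ ≤ s*‖x‖ + t*‖y‖ := by
      calc ‖s • x + t • y‖ ≤ ‖s • x‖ + ‖t • y‖ := norm_add_le _ _
        _ = s*‖x‖ + t*‖y‖ := by
            rw [norm_smul, norm_smul, Real.norm_eq_abs, Real.norm_eq_abs,
              abs_of_nonneg hs, abs_of_nonneg ht]
    have h1 : Real.sqrt (1 + β*‖s • x + t • y‖^2) ≤ Real.sqrt (1 + β*(s*‖x‖+t*‖y‖)^2) := by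
      apply Real.sqrt_le_sqrt
      have := pow_le_pow_left₀ (norm_nonneg _) hz 2
      nlinarith
    have h2 := sqrt_convex_scalar β s t ‖x‖ ‖y‖ hβ (norm_nonneg x) (norm_nonneg y) hs ht hst
    linarith
  · -- Lipschitz gradient
    intro x y
    rw [hgrad x, hgrad y]
    set p := Real.sqrt (1 + β * ⟪x, x⟫) with hpdef
    set q := Real.sqrt (1 + β * ⟪y, y⟫) with hqdef
    have hpx : (0:ℝ) < 1 + β * ⟪x, x⟫ := by nlinarith [real_inner_self_nonneg (x := x)]
    have hqx : (0:ℝ) < 1 + β * ⟪y, y⟫ := by nlinarith [real_inner_self_nonneg (x := y)]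
    have hp2 : p^2 = 1 + β*‖x‖^2 := by rw [hpdef, Real.sq_sqrt hpx.le, hinn]
    have hq2 : q^2 = 1 + β*‖y‖^2 := by rw [hqdef, Real.sq_sqrt hqx.le, hinn]
    have hp1 : 1 ≤ p := by
      have h := Real.sqrt_le_sqrt (show (1:ℝ) ≤ 1 + β * ⟪x, x⟫ by
        nlinarith [real_inner_self_nonneg (x := x)])
      rwa [Real.sqrt_one] at h
    have hq1 : 1 ≤ q := by
      have h := Real.sqrt_le_sqrt (show (1:ℝ) ≤ 1 + β * ⟪y, y⟫ by
        nlinarith [real_inner_self_nonneg (x := y)])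
      rwa [Real.sqrt_one] at h
    have hp0 : 0 < p := lt_of_lt_of_le one_pos hp1
    have hq0 : 0 < q := lt_of_lt_of_le one_pos hq1
    have hpq : 1 + β*‖x‖*‖y‖ ≤ p*q := by
      rw [hpdef, hqdef, hinn, hinn]
      exact sqrt_prod_ge β ‖x‖ ‖y‖ hβ (norm_nonneg x) (norm_nonneg y)
    have hsub : (a + (β/p) • x) - (a + (β/q) • y) = (β/p) • x - (β/q) • y := by abel
    rw [hsub]
    have main := lip_scalar β ‖x‖ ‖y‖ ⟪x, y⟫ p q hβ (norm_nonneg x) (norm_nonneg y)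
      (real_inner_le_norm x y) hp2 hq2 hp1 hq1 hpq
    have hnorm2 : ‖(β/p) • x - (β/q) • y‖^2
        = (β/p)^2*‖x‖^2 - 2*((β/p)*((β/q)*⟪x, y⟫)) + (β/q)^2*‖y‖^2 := by
      rw [norm_sub_sq_real, norm_smul, norm_smul, real_inner_smul_left, real_inner_smul_right,
        Real.norm_eq_abs, abs_of_nonneg (by positivity : (0:ℝ) ≤ β/p),
        Real.norm_eq_abs, abs_of_nonneg (by positivity : (0:ℝ) ≤ β/q)]
      ring
    have hxy2 : ‖x - y‖^2 = ‖x‖^2 - 2*⟪x, y⟫ + ‖y‖^2 := norm_sub_sq_real x y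
    have hsq : ‖(β/p) • x - (β/q) • y‖^2 ≤ (β*‖x - y‖)^2 := by
      rw [hnorm2, mul_pow, hxy2]
      have hb2 := mul_le_mul_of_nonneg_left main (sq_nonneg β)
      have e1 : (β/p)^2*‖x‖^2 = β^2*(‖x‖^2/p^2) := by field_simp
      have e2 : (β/q)^2*‖y‖^2 = β^2*(‖y‖^2/q^2) := by field_simp
      have e3 : (β/p)*((β/q)*⟪x, y⟫) = β^2*(⟪x, y⟫/(p*q)) := by field_simp
      rw [e1, e2, e3]
      calc β^2*(‖x‖^2/p^2) - 2*(β^2*(⟪x, y⟫/(p*q))) + β^2*(‖y‖^2/q^2)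
          = β^2*(‖x‖^2/p^2 + ‖y‖^2/q^2 - 2*⟪x, y⟫/(p*q)) := by ring
        _ ≤ β^2*(‖x‖^2 + ‖y‖^2 - 2*⟪x, y⟫) := hb2
        _ = β^2*(‖x‖^2 - 2*⟪x, y⟫ + ‖y‖^2) := by ring
    calc ‖(β/p) • x - (β/q) • y‖ = Real.sqrt (‖(β/p) • x - (β/q) • y‖^2) :=
          (Real.sqrt_sq (norm_nonneg _)).symm
      _ ≤ Real.sqrt ((β*‖x - y‖)^2) := Real.sqrt_le_sqrt hsq
      _ = β*‖x - y‖ := Real.sqrt_sq (by positivity)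
  · -- condition (B)
    intro C _ _ hCsub x hx d hd hd0
    have hxnn : ∀ i, 0 ≤ x i := hCsub hx
    have hdnn : ∀ i, 0 ≤ d i := by
      intro i
      by_contra hneg
      push_neg at hneg
      have htpos : 0 ≤ (x i + 1)/(-(d i)) := by
        apply div_nonneg (by linarith [hxnn i]) (by linarith)
      have hmem := hCsub (hd x hx _ htpos) i
      have happ : (x + ((x i + 1)/(-(d i))) • d) i = x i + ((x i + 1)/(-(d i))) * d i := by
        simp [PiLp.add_apply, PiLp.smul_apply, smul_eq_mul]
      rw [happ] at hmem
      have hdi : d i ≠ 0 := ne_of_lt hneg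
      have hdneg : -d i ≠ 0 := ne_of_gt (by linarith)
      have : ((x i + 1)/(-(d i))) * d i = -(x i + 1) := by field_simp
      rw [this] at hmem
      linarith
    obtain ⟨j, hj⟩ : ∃ j, d j ≠ 0 := by
      by_contra h
      push_neg at h
      exact hd0 (by ext i; simpa using h i)
    have hdj : 0 < d j := lt_of_le_of_ne (hdnn j) (Ne.symm hj)
    rw [hgrad x, inner_add_left, real_inner_smul_left]
    have h1 : 0 < ⟪a, d⟫ := by
      rw [PiLp.inner_apply]
      simp only [RCLike.inner_apply, conj_trivial]
      apply Finset.sum_pos' (fun i _ => mul_nonneg (hdnn i) (ha i).le)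
      exact ⟨j, Finset.mem_univ j, mul_pos hdj (ha j)⟩
    have h2 : 0 ≤ ⟪x, d⟫ := by
      rw [PiLp.inner_apply]
      simp only [RCLike.inner_apply, conj_trivial]
      exact Finset.sum_nonneg fun i _ => mul_nonneg (hdnn i) (hxnn i)
    have h3 : 0 ≤ β / Real.sqrt (1 + β * ⟪x, x⟫) :=
      div_nonneg hβ.le (Real.sqrt_nonneg _)
    nlinarith [mul_nonneg h3 h2]
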